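/- Fix η, r > 0 and consider the recursion a_{t+1} = a_t − η·σ′(a_t+b_t)·a_t + η·(σ(a_t) − σ(a_t+b_t)), b_{t+1} = b_t − η·r·σ′(a_t+b_t)·a_t. Suppose that a_t → +∞, a_t + b_t → −∞, and for all t beyond some t₀ the ratio L_t := σ′(a_t+b_t)·a_t / (σ(a_t) − σ(a_t+b_t)) satisfies L_t ≥ (1 + 1/a_t)/((1+r) + 1/a_t). Then liminf_{t→∞} σ′(a_t+b_t)·a_t ≥ 1/(1+r), and consequently liminf_{t→∞} σ′(a_t+b_t)·(r·a_t − b_t) ≥ r/(1+r). -/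

import Mathlib

/-- The sigmoid function `σ(z) = 1/(1+e^{-z})`. -/
noncomputable def sigmoid (z : ℝ) : ℝ := 1 / (1 + Real.exp (-z))

/-- The derivative of the sigmoid, `σ'(z) = σ(z)(1-σ(z))`. -/
noncomputable def sigmoid' (z : ℝ) : ℝ := sigmoid z * (1 - sigmoid z)

lemma sigmoid_pos (z : ℝ) : 0 < sigmoid z := by
  unfold sigmoid
  positivity

lemma sigmoid_lt_one (z : ℝ) : sigmoid z < 1 := by
  unfold sigmoid
  rw [div_lt_one (by positivity)]
  have := Real.exp_pos (-z)
  linarith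

lemma sigmoid_le_exp (z : ℝ) : sigmoid z ≤ Real.exp z := by
  unfold sigmoid
  rw [div_le_iff₀ (by positivity)]
  have h : Real.exp z * (1 + Real.exp (-z)) = Real.exp z + 1 := by
    rw [mul_add, mul_one, ← Real.exp_add]
    simp
  rw [h]
  have := (Real.exp_pos z).le
  linarith

lemma tendsto_sigmoid_atTop :
    Filter.Tendsto sigmoid Filter.atTop (nhds 1) := by
  have h : Filter.Tendsto (fun z : ℝ => Real.exp (-z)) Filter.atTop (nhds 0) :=
    Real.tendsto_exp_atBot.comp Filter.tendsto_neg_atTop_atBot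
  have h2 : Filter.Tendsto (fun z : ℝ => 1 + Real.exp (-z)) Filter.atTop (nhds 1) := by
    have := (tendsto_const_nhds (x := (1:ℝ)) (f := Filter.atTop (α := ℝ))).add h
    simpa using this
  have := (tendsto_const_nhds (x := (1:ℝ)) (f := Filter.atTop (α := ℝ))).div h2 one_ne_zero
  rw [div_one] at this
  exact this

lemma tendsto_sigmoid_atBot :
    Filter.Tendsto sigmoid Filter.atBot (nhds 0) := by
  have h : Filter.Tendsto (fun z : ℝ => Real.exp (-z)) Filter.atBot Filter.atTop :=
    Real.tendsto_exp_atTop.comp Filter.tendsto_neg_atBot_atTop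
  have h2 : Filter.Tendsto (fun z : ℝ => 1 + Real.exp (-z)) Filter.atBot Filter.atTop :=
    Filter.tendsto_atTop_add_const_left _ _ h
  have := h2.inv_tendsto_atTop
  have heq : sigmoid = fun z : ℝ => ((fun z : ℝ => 1 + Real.exp (-z)) z)⁻¹ := by
    funext z; simp [sigmoid, one_div]
  rw [heq]
  exact this

lemma tendsto_sigmoid'_mul_id_atBot :
    Filter.Tendsto (fun z : ℝ => sigmoid' z * z) Filter.atBot (nhds 0) := by
  have hx : Filter.Tendsto (fun x : ℝ => x * Real.exp (-x)) Filter.atTop (nhds 0) := by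
    have := Real.tendsto_pow_mul_exp_neg_atTop_nhds_zero 1
    simpa using this
  have h : Filter.Tendsto (fun z : ℝ => (-z) * Real.exp z) Filter.atBot (nhds 0) := by
    have := hx.comp Filter.tendsto_neg_atBot_atTop
    simpa [Function.comp_def] using this
  have hneg : Filter.Tendsto (fun z : ℝ => -((-z) * Real.exp z)) Filter.atBot (nhds 0) := by
    simpa using h.neg
  apply tendsto_of_tendsto_of_tendsto_of_le_of_le' hneg h
  · filter_upwards [Filter.eventually_le_atBot (0 : ℝ)] with z hz
    -- -((-z) * exp z) ≤ sigmoid' z * z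
    have h1 : sigmoid' z ≤ Real.exp z := by
      have := sigmoid_le_exp z
      have h2 := sigmoid_pos z
      have h3 := sigmoid_lt_one z
      unfold sigmoid'
      nlinarith
    have h0 : 0 ≤ sigmoid' z := by
      have h2 := sigmoid_pos z
      have h3 := sigmoid_lt_one z
      unfold sigmoid'
      nlinarith
    nlinarith
  · filter_upwards [Filter.eventually_le_atBot (0 : ℝ)] with z hz
    have h0 : 0 ≤ sigmoid' z := by
      have h2 := sigmoid_pos z
      have h3 := sigmoid_lt_one z
      unfold sigmoid'
      nlinarith
    nlinarith [Real.exp_pos z]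

/-- If `a_t → +∞`, `a_t + b_t → -∞` and eventually
`L_t ≥ (1 + 1/a_t)/((1+r) + 1/a_t)`, then `liminf σ'(a_t+b_t)·a_t ≥ 1/(1+r)` and
`liminf σ'(a_t+b_t)·(r·a_t - b_t) ≥ r/(1+r)` (liminf bounds expressed in
`ε`-eventual form). -/
theorem liminf_sigma_deriv_bounds (η r : ℝ) (hη : 0 < η) (hr : 0 < r)
    (a b : ℕ → ℝ)
    (ha : ∀ t : ℕ, a (t + 1) =
      a t - η * sigmoid' (a t + b t) * a t +
        η * (sigmoid (a t) - sigmoid (a t + b t)))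
    (hb : ∀ t : ℕ, b (t + 1) = b t - η * r * sigmoid' (a t + b t) * a t)
    (hatop : Filter.Tendsto a Filter.atTop Filter.atTop)
    (habot : Filter.Tendsto (fun t : ℕ => a t + b t) Filter.atTop Filter.atBot)
    (hL : ∃ t₀ : ℕ, ∀ t ≥ t₀,
      sigmoid' (a t + b t) * a t / (sigmoid (a t) - sigmoid (a t + b t)) ≥
        (1 + 1 / a t) / ((1 + r) + 1 / a t)) :
    (∀ ε > (0 : ℝ), ∀ᶠ t : ℕ in Filter.atTop,
      sigmoid' (a t + b t) * a t ≥ 1 / (1 + r) - ε) ∧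
    (∀ ε > (0 : ℝ), ∀ᶠ t : ℕ in Filter.atTop,
      sigmoid' (a t + b t) * (r * a t - b t) ≥ r / (1 + r) - ε) := by
  have hr1 : (0:ℝ) < 1 + r := by linarith
  -- limits
  have h1 : Filter.Tendsto (fun t => sigmoid (a t)) Filter.atTop (nhds 1) :=
    tendsto_sigmoid_atTop.comp hatop
  have h0 : Filter.Tendsto (fun t => sigmoid (a t + b t)) Filter.atTop (nhds 0) :=
    tendsto_sigmoid_atBot.comp habot
  have hD : Filter.Tendsto (fun t => sigmoid (a t) - sigmoid (a t + b t))
      Filter.atTop (nhds 1) := by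
    simpa using h1.sub h0
  have hRa : Filter.Tendsto (fun t => 1 / a t) Filter.atTop (nhds 0) := by
    simp only [one_div]
    exact hatop.inv_tendsto_atTop
  have hR : Filter.Tendsto (fun t => (1 + 1 / a t) / ((1 + r) + 1 / a t))
      Filter.atTop (nhds (1 / (1 + r))) := by
    have := ((tendsto_const_nhds (x := (1:ℝ)).add hRa).div
      ((tendsto_const_nhds (x := (1+r))).add hRa) (by simpa using hr1.ne'))
    rw [add_zero, add_zero] at this
    exact this
  have hDR : Filter.Tendsto
      (fun t => (sigmoid (a t) - sigmoid (a t + b t)) *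
        ((1 + 1 / a t) / ((1 + r) + 1 / a t)))
      Filter.atTop (nhds (1 / (1 + r))) := by
    have := hD.mul hR
    simpa using this
  obtain ⟨t₀, hLt⟩ := hL
  -- first claim
  have first : ∀ ε > (0 : ℝ), ∀ᶠ t : ℕ in Filter.atTop,
      sigmoid' (a t + b t) * a t ≥ 1 / (1 + r) - ε := by
    intro ε hε
    have E1 : ∀ᶠ t : ℕ in Filter.atTop,
        (sigmoid (a t) - sigmoid (a t + b t)) *
          ((1 + 1 / a t) / ((1 + r) + 1 / a t)) > 1 / (1 + r) - ε :=
      hDR.eventually (eventually_gt_nhds (by linarith))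
    have E2 : ∀ᶠ t : ℕ in Filter.atTop,
        sigmoid (a t) - sigmoid (a t + b t) > 0 :=
      hD.eventually (eventually_gt_nhds one_pos)
    have E3 : ∀ᶠ t : ℕ in Filter.atTop,
        sigmoid' (a t + b t) * a t / (sigmoid (a t) - sigmoid (a t + b t)) ≥
          (1 + 1 / a t) / ((1 + r) + 1 / a t) :=
      Filter.eventually_atTop.mpr ⟨t₀, hLt⟩
    filter_upwards [E1, E2, E3] with t e1 e2 e3
    have := (le_div_iff₀ e2).mp e3
    nlinarith
  refine ⟨first, ?_⟩
  -- second claim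
  have hzc : Filter.Tendsto (fun t => sigmoid' (a t + b t) * (a t + b t))
      Filter.atTop (nhds 0) := tendsto_sigmoid'_mul_id_atBot.comp habot
  intro ε hε
  have hε' : (0:ℝ) < ε / (2 * (1 + r)) := by positivity
  have E1 := first _ hε'
  have E2 : ∀ᶠ t : ℕ in Filter.atTop,
      sigmoid' (a t + b t) * (a t + b t) < ε / 2 :=
    hzc.eventually (eventually_lt_nhds (by linarith))
  filter_upwards [E1, E2] with t e1 e2
  have key : sigmoid' (a t + b t) * (r * a t - b t) =
      (1 + r) * (sigmoid' (a t + b t) * a t) -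
        sigmoid' (a t + b t) * (a t + b t) := by ring
  rw [key]
  have h1' : (1 + r) * (sigmoid' (a t + b t) * a t) ≥
      (1 + r) * (1 / (1 + r) - ε / (2 * (1 + r))) := by
    apply mul_le_mul_of_nonneg_left e1 hr1.le
  have hcalc : (1 + r) * (1 / (1 + r) - ε / (2 * (1 + r))) = 1 - ε / 2 := by
    field_simp
  rw [hcalc] at h1'
  have hrle : r / (1 + r) ≤ 1 := by
    rw [div_le_one hr1]; linarith
  linarith
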